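/- Let F be a field and G = ([n], E) a labelled simple graph with n ≥ 1, with 𝒜_G ≤ Λ(n,F) the alternating matrix space spanned by the elementary alternating matrices A_{i,j} for {i,j} ∈ E. Then the chromatic number of G equals the totally-isotropic decomposition number of 𝒜_G, i.e., χ(G) = χ(𝒜_G). -/

import Mathlib

open Matrix BigOperators

/-- The elementary alternating matrix `A_{i,j}`. -/
def elemAlt (n : ℕ) (F : Type) [Field F] (i j : Fin n) : Matrix (Fin n) (Fin n) F :=
  Matrix.single i j 1 - Matrix.single j i 1

/-- The alternating matrix space `𝒜_G` spanned by the elementary alternating matrices of the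
edges of a graph `G`. -/
def graphSpace (n : ℕ) (F : Type) [Field F] (G : SimpleGraph (Fin n)) :
    Submodule F (Matrix (Fin n) (Fin n) F) :=
  Submodule.span F {A | ∃ i j, G.Adj i j ∧ A = elemAlt n F i j}

variable {n c : ℕ} {F : Type} [Field F]


def suppIn (n : ℕ) (F : Type) [Field F] (T : Set (Fin n)) : Submodule F (Fin n → F) where
  carrier := {u | ∀ v, v ∉ T → u v = 0}
  add_mem' := by intro a b ha hb v hv; simp [ha v hv, hb v hv]
  zero_mem' := by intro v hv; rfl
  smul_mem' := by intro r a ha v hv; simp [ha v hv]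

lemma mem_suppIn {T : Set (Fin n)} {u : Fin n → F} :
    u ∈ suppIn n F T ↔ ∀ v, v ∉ T → u v = 0 := Iff.rfl

lemma suppIn_mono {T T' : Set (Fin n)} (h : T ⊆ T') : suppIn n F T ≤ suppIn n F T' :=
  fun u hu v hv => hu v (fun hvT => hv (h hvT))

lemma span_single_le_suppIn (T : Set (Fin n)) :
    Submodule.span F ((fun w => (Pi.single w (1:F) : Fin n → F)) '' T) ≤ suppIn n F T := by
  rw [Submodule.span_le]
  rintro _ ⟨w, hw, rfl⟩ u hu
  exact Pi.single_eq_of_ne (by rintro rfl; exact hu hw) 1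

lemma dot_elemAlt (i j : Fin n) (x y : Fin n → F) :
    x ⬝ᵥ (elemAlt n F i j) *ᵥ y = x i * y j - x j * y i := by
  rw [elemAlt, Matrix.sub_mulVec, dotProduct_sub]
  simp [Matrix.mulVec, dotProduct, Matrix.single, ite_and, mul_comm,
    Finset.sum_ite_eq, Finset.mul_sum]

lemma dot_graphSpace_eq_zero {G : SimpleGraph (Fin n)} {u u' : Fin n → F} {T : Set (Fin n)}
    (hu : u ∈ suppIn n F T) (hu' : u' ∈ suppIn n F T)
    (hT : ∀ v ∈ T, ∀ w ∈ T, ¬ G.Adj v w) :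
    ∀ A ∈ graphSpace n F G, u ⬝ᵥ A *ᵥ u' = 0 := by
  intro A hA
  induction hA using Submodule.span_induction with
  | mem A h =>
    obtain ⟨i, j, hadj, rfl⟩ := h
    rw [dot_elemAlt]
    by_cases hi : i ∈ T
    · by_cases hj : j ∈ T
      · exact absurd hadj (hT i hi j hj)
      · rw [mem_suppIn.mp hu j hj, mem_suppIn.mp hu' j hj]; ring
    · rw [mem_suppIn.mp hu i hi, mem_suppIn.mp hu' i hi]; ring
  | zero => simp
  | add A B hA hB ihA ihB => rw [Matrix.add_mulVec, dotProduct_add, ihA, ihB]; ring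
  | smul a A hA ihA => rw [Matrix.smul_mulVec, dotProduct_smul, ihA]; simp

lemma coloring_mem_S {c : ℕ} (G : SimpleGraph (Fin n)) (f : Fin n → Fin c)
    (hproper : ∀ {v w : Fin n}, G.Adj v w → f v ≠ f w) (hsurj : Function.Surjective f) :
    ∃ U : Fin c → Submodule F (Fin n → F),
      DirectSum.IsInternal U ∧ (∀ i, U i ≠ ⊥) ∧
      ∀ i, ∀ u ∈ U i, ∀ u' ∈ U i, ∀ A ∈ graphSpace n F G, u ⬝ᵥ A *ᵥ u' = 0 := by
  refine ⟨fun k => Submodule.span F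
      ((fun w => (Pi.single w (1:F) : Fin n → F)) '' {v | f v = k}), ?_, ?_, ?_⟩
  · rw [DirectSum.isInternal_submodule_iff_iSupIndep_and_iSup_eq_top]
    constructor
    · intro k
      have h1 : Submodule.span F ((fun w => (Pi.single w (1:F) : Fin n → F)) '' {v | f v = k})
          ≤ suppIn n F {v | f v = k} := span_single_le_suppIn _
      have h2 : (⨆ l, ⨆ _ : l ≠ k, Submodule.span F
            ((fun w => (Pi.single w (1:F) : Fin n → F)) '' {v | f v = l}))
          ≤ suppIn n F {v | f v ≠ k} := by
        refine iSup₂_le fun l hl => le_trans (span_single_le_suppIn _) (suppIn_mono ?_)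
        intro v hv
        simp only [Set.mem_setOf_eq] at hv ⊢
        rw [hv]; exact hl
      rw [disjoint_iff_inf_le]
      intro u hu
      have hu1 := h1 hu.1
      have hu2 := h2 hu.2
      have : u = 0 := by
        funext v
        by_cases hfv : f v = k
        · exact mem_suppIn.mp hu2 v (by simp [hfv])
        · exact mem_suppIn.mp hu1 v hfv
      simp [this]
    · rw [← Submodule.span_iUnion]
      rw [eq_top_iff]
      intro u _
      have hrep : u = ∑ v, u v • (Pi.single v (1:F) : Fin n → F) := by
        funext j
        simp [Pi.single_apply, Finset.sum_apply]
      rw [hrep]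
      refine Submodule.sum_mem _ fun v _ => Submodule.smul_mem _ _ (Submodule.subset_span ?_)
      exact Set.mem_iUnion.mpr ⟨f v, ⟨v, rfl, rfl⟩⟩
  · intro k
    obtain ⟨v, rfl⟩ := hsurj k
    intro hbot
    have hmem : (Pi.single v (1:F) : Fin n → F) ∈ Submodule.span F
        ((fun w => (Pi.single w (1:F) : Fin n → F)) '' {w | f w = f v}) :=
      Submodule.subset_span ⟨v, rfl, rfl⟩
    have hbot' : Submodule.span F
        ((fun w => (Pi.single w (1:F) : Fin n → F)) '' {w | f w = f v}) = ⊥ := hbot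
    rw [hbot', Submodule.mem_bot] at hmem
    simpa using congrFun hmem v
  · intro k u hu u' hu' A hA
    refine dot_graphSpace_eq_zero (span_single_le_suppIn _ hu) (span_single_le_suppIn _ hu')
      ?_ A hA
    intro v hv w hw hadj
    exact hproper hadj (hv.trans hw.symm)

lemma greedy (hc : 0 < c) (R : Finset (Fin n)) :
    ∀ (X : Fin c → Submodule F (Fin n → F)),
      ((⨆ k, X k) ⊔ Submodule.span F
          ((fun w => (Pi.single w (1:F) : Fin n → F)) '' {w : Fin n | w ∉ R}) = ⊤) →
      ∃ (f : Fin n → Fin c) (x : Fin n → Fin n → F),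
        (∀ v ∈ R, x v ∈ X (f v) ∧ x v v ≠ 0) ∧
        (∀ v ∈ R, ∀ w ∈ R, v ≠ w → f v = f w → x v w = 0 ∨ x w v = 0) := by
  induction R using Finset.strongInduction with
  | _ R ih =>
    intro X hspan
    rcases R.eq_empty_or_nonempty with rfl | ⟨v, hv⟩
    · exact ⟨fun _ => ⟨0, hc⟩, 0, by simp, by simp⟩
    have hsingle : (Pi.single v (1:F) : Fin n → F) ∈
        (⨆ k, X k) ⊔ Submodule.span F
          ((fun w => (Pi.single w (1:F) : Fin n → F)) '' {w : Fin n | w ∉ R}) := by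
      rw [hspan]; trivial
    rw [Submodule.mem_sup] at hsingle
    obtain ⟨a, ha, p, hp, hap⟩ := hsingle
    rw [Submodule.mem_iSup_iff_exists_finsupp] at ha
    obtain ⟨g, hg, hgsum⟩ := ha
    have hgsum' : ∑ k, g k = a := by
      rw [← hgsum, Finsupp.sum_fintype]; intro; rfl
    have hpv : p v = 0 := by
      have hple := span_single_le_suppIn (F := F) {w : Fin n | w ∉ R} hp
      exact (mem_suppIn.mp hple) v (by simp [hv])
    have hav : a v = 1 := by
      have := congrFun hap v
      simp only [Pi.add_apply, Pi.single_eq_same, hpv, add_zero] at this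
      exact this
    have hex : ∃ k, g k v ≠ 0 := by
      by_contra hno
      push_neg at hno
      have : a v = 0 := by
        rw [← hgsum']; simp only [Finset.sum_apply]
        exact Finset.sum_eq_zero fun k _ => hno k
      rw [hav] at this; exact one_ne_zero this
    obtain ⟨k, hgkv⟩ := hex
    set Kv : Submodule F (Fin n → F) := LinearMap.ker (LinearMap.proj v) with hKv
    have memKv : ∀ u : Fin n → F, u ∈ Kv ↔ u v = 0 := fun u => by
      simp [hKv, LinearMap.mem_ker]
    set X' := Function.update X k (X k ⊓ Kv) with hX'
    have hX'k : X' k = X k ⊓ Kv := by rw [hX', Function.update_self]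
    have hX'le : ∀ l, X' l ≤ X l := by
      intro l
      by_cases hl : l = k
      · subst hl; rw [hX'k]; exact inf_le_left
      · rw [hX', Function.update_of_ne hl]
    set R' := R.erase v with hR'
    have hss : R' ⊂ R := Finset.erase_ssubset hv
    have hspan' : (⨆ l, X' l) ⊔ Submodule.span F
        ((fun w => (Pi.single w (1:F) : Fin n → F)) '' {w : Fin n | w ∉ R'}) = ⊤ := by
      set M := (⨆ l, X' l) ⊔ Submodule.span F
          ((fun w => (Pi.single w (1:F) : Fin n → F)) '' {w : Fin n | w ∉ R'}) with hM
      rw [eq_top_iff, ← hspan]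
      have hspanmono : Submodule.span F
          ((fun w => (Pi.single w (1:F) : Fin n → F)) '' {w : Fin n | w ∉ R}) ≤ M := by
        refine le_trans (Submodule.span_mono (Set.image_mono ?_)) le_sup_right
        intro w hw
        exact fun hmem => hw (Finset.mem_of_mem_erase hmem)
      refine sup_le ?_ hspanmono
      refine iSup_le fun l => ?_
      by_cases hl : l = k
      · subst hl
        intro u hu
        have hgkM : g l ∈ M := by
          have h1 : (Pi.single v (1:F) : Fin n → F) ∈ M :=
            Submodule.mem_sup_right (Submodule.subset_span ⟨v, by simp [hR'], rfl⟩)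
          have h2 : p ∈ M := hspanmono hp
          have h3 : ∀ l' ∈ Finset.univ.erase l, g l' ∈ M := by
            intro l' hl'
            have hne : l' ≠ l := (Finset.mem_erase.mp hl').1
            have heq : X l' = X' l' := by rw [hX', Function.update_of_ne hne]
            exact Submodule.mem_sup_left (Submodule.mem_iSup_of_mem l' (heq ▸ hg l'))
          have heq : g l = Pi.single v (1:F) - p - ∑ l' ∈ Finset.univ.erase l, g l' := by
            have h4 := Finset.add_sum_erase Finset.univ g (Finset.mem_univ l)
            rw [hgsum'] at h4
            have hap' : a = Pi.single v (1:F) - p := by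
              rw [← hap]; abel
            rw [hap'] at h4
            linear_combination (norm := module) h4
          rw [heq]
          exact sub_mem (sub_mem h1 h2) (Submodule.sum_mem _ h3)
        have hsplit : u = (u - (u v / g l v) • g l) + (u v / g l v) • g l := by abel
        rw [hsplit]
        refine add_mem ?_ (Submodule.smul_mem _ _ hgkM)
        have hmem : u - (u v / g l v) • g l ∈ X l ⊓ Kv := by
          rw [Submodule.mem_inf]
          refine ⟨sub_mem hu (Submodule.smul_mem _ _ (hg l)), (memKv _).mpr ?_⟩
          simp only [Pi.sub_apply, Pi.smul_apply, smul_eq_mul]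
          field_simp
          simp
        exact Submodule.mem_sup_left (Submodule.mem_iSup_of_mem l (hX'k ▸ hmem))
      · have heq : X l = X' l := by rw [hX', Function.update_of_ne hl]
        rw [heq]
        exact le_trans (le_iSup X' l) le_sup_left
    obtain ⟨f', x', H1, H2⟩ := ih R' hss X' hspan'
    refine ⟨Function.update f' v k, Function.update x' v (g k), ?_, ?_⟩
    · intro w hw
      by_cases hwv : w = v
      · subst hwv
        simp only [Function.update_self]
        exact ⟨hg k, hgkv⟩
      · have hwR' : w ∈ R' := Finset.mem_erase.mpr ⟨hwv, hw⟩
        simp only [Function.update_of_ne hwv]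
        obtain ⟨h1, h2⟩ := H1 w hwR'
        exact ⟨hX'le _ h1, h2⟩
    · intro v1 h1 v2 h2 hne hfeq
      by_cases hv1 : v1 = v
      · subst hv1
        have hv2 : v2 ≠ v1 := fun h => hne h.symm
        have hv2R' : v2 ∈ R' := Finset.mem_erase.mpr ⟨hv2, h2⟩
        right
        simp only [Function.update_self, Function.update_of_ne hv2] at hfeq ⊢
        have hmem := (H1 v2 hv2R').1
        rw [← hfeq, hX'k] at hmem
        exact (memKv _).mp hmem.2
      · by_cases hv2 : v2 = v
        · subst hv2
          have hv1R' : v1 ∈ R' := Finset.mem_erase.mpr ⟨hv1, h1⟩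
          left
          simp only [Function.update_self, Function.update_of_ne hv1] at hfeq ⊢
          have hmem := (H1 v1 hv1R').1
          rw [hfeq, hX'k] at hmem
          exact (memKv _).mp hmem.2
        · have hv1R' : v1 ∈ R' := Finset.mem_erase.mpr ⟨hv1, h1⟩
          have hv2R' : v2 ∈ R' := Finset.mem_erase.mpr ⟨hv2, h2⟩
          simp only [Function.update_of_ne hv1, Function.update_of_ne hv2] at hfeq ⊢
          exact H2 v1 hv1R' v2 hv2R' hne hfeq

/-- The chromatic number of `G` equals the totally-isotropic decomposition number of `𝒜_G`:
the least `c` such that `Fⁿ` decomposes as a direct sum of `c` nonzero totally-isotropic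
subspaces of `𝒜_G`. -/
theorem chromatic_eq_isotropic_decomposition_number (n : ℕ) (hn : 1 ≤ n)
    (F : Type) [Field F] (G : SimpleGraph (Fin n)) :
    G.chromaticNumber =
      ((sInf {c : ℕ | ∃ U : Fin c → Submodule F (Fin n → F),
        DirectSum.IsInternal U ∧ (∀ i, U i ≠ ⊥) ∧
        ∀ i, ∀ u ∈ U i, ∀ u' ∈ U i, ∀ A ∈ graphSpace n F G,
          u ⬝ᵥ A *ᵥ u' = 0} : ℕ) : ℕ∞) := by
  classical
  set S := {c : ℕ | ∃ U : Fin c → Submodule F (Fin n → F),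
        DirectSum.IsInternal U ∧ (∀ i, U i ≠ ⊥) ∧
        ∀ i, ∀ u ∈ U i, ∀ u' ∈ U i, ∀ A ∈ graphSpace n F G,
          u ⬝ᵥ A *ᵥ u' = 0} with hS
  have hncol : G.Colorable n := by simpa using G.colorable_of_fintype
  set m₀ := sInf {m : ℕ | G.Colorable m} with hm₀
  have hnmem : n ∈ {m : ℕ | G.Colorable m} := hncol
  have hm₀col : G.Colorable m₀ := Nat.sInf_mem ⟨n, hnmem⟩
  have hC' := hm₀col
  obtain ⟨C⟩ := hC'
  have hm₀pos : 0 < m₀ := by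
    rcases Nat.eq_zero_or_pos m₀ with h0 | h
    · exfalso; exact Fin.elim0 (h0 ▸ C ⟨0, hn⟩)
    · exact h
  have hsurj : Function.Surjective C := by
    by_contra hns
    rw [Function.Surjective] at hns
    push_neg at hns
    obtain ⟨j, hj⟩ := hns
    have hcard : Fintype.card {i : Fin m₀ // i ≠ j} = m₀ - 1 := by
      rw [Fintype.card_subtype_compl]
      simp
    let e := Fintype.equivFinOfCardEq hcard
    have hcol' : G.Colorable (m₀ - 1) := by
      refine ⟨SimpleGraph.Coloring.mk (fun v => e ⟨C v, hj v⟩) ?_⟩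
      intro v w hadj heq
      exact C.valid hadj (congrArg Subtype.val (e.injective heq))
    have hmem' : m₀ - 1 ∈ {m : ℕ | G.Colorable m} := hcol'
    have h5 : m₀ ≤ m₀ - 1 := Nat.sInf_le hmem'
    omega
  have hm₀S : m₀ ∈ S := by
    rw [hS]
    exact coloring_mem_S G C (fun hadj => C.valid hadj) hsurj
  have hmain : ∀ c ∈ S, G.Colorable c := by
    rintro c ⟨U, hint, hne, hiso⟩
    have hc : 0 < c := by
      rcases Nat.eq_zero_or_pos c with h0 | h
      · exfalso
        subst h0
        have htop := hint.submodule_iSup_eq_top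
        rw [iSup_of_empty] at htop
        have : (Pi.single ⟨0, hn⟩ (1:F) : Fin n → F) ∈ (⊥ : Submodule F (Fin n → F)) := by
          rw [htop]; trivial
        rw [Submodule.mem_bot] at this
        simpa using congrFun this ⟨0, hn⟩
      · exact h
    have htop : (⨆ k, U k) = ⊤ := hint.submodule_iSup_eq_top
    obtain ⟨f, x, H1, H2⟩ := greedy hc Finset.univ U (by
      have hempty : {w : Fin n | w ∉ (Finset.univ : Finset (Fin n))} = ∅ := by
        ext w; simp
      rw [hempty]
      simp [htop])
    refine ⟨SimpleGraph.Coloring.mk f ?_⟩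
    intro v w hadj heq
    obtain ⟨hxv, hxvv⟩ := H1 v (Finset.mem_univ v)
    obtain ⟨hxw, hxww⟩ := H1 w (Finset.mem_univ w)
    have hA : elemAlt n F v w ∈ graphSpace n F G :=
      Submodule.subset_span ⟨v, w, hadj, rfl⟩
    have h0 := hiso (f v) (x v) hxv (x w) (heq ▸ hxw) _ hA
    rw [dot_elemAlt] at h0
    have hdisj := H2 v (Finset.mem_univ v) w (Finset.mem_univ w) hadj.ne heq
    have hprod : x v v * x w w = 0 := by
      rcases hdisj with h | h <;> rw [h] at h0 <;> simpa using h0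
    exact mul_ne_zero hxvv hxww hprod
  rw [hm₀col.chromaticNumber_eq_sInf]
  norm_cast
  apply le_antisymm
  · have hcolS : G.Colorable (sInf S) := hmain _ (Nat.sInf_mem ⟨m₀, hm₀S⟩)
    have hmem2 : sInf S ∈ {m : ℕ | G.Colorable m} := hcolS
    exact Nat.sInf_le hmem2
  · exact Nat.sInf_le hm₀S
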